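/- Let a ∈ ℝ and let u : ℝ → ℝ be the constant function u(z) = a. Then for every k ≥ 0, the Lenard operator L_k[u] is the constant function with value (1/2)·binomial(2k, k)·a^k. -/
import Mathlib


/-- The Lenard sequence of a function `u : ℝ → ℝ`:
`L₀[u] = 1/2`, `L₁[u] = u`, and for `k ≥ 1`,
`L_{k+1}[u] = (L_k[u])'' + 3·L_k[u]·L₁[u]
  + ∑_{j=1}^{k-1} ( L_{k-j}[u]·(4·L₁[u]·L_j[u] - L_{j+1}[u] + 2·(L_j[u])'') - (L_j[u])'·(L_{k-j}[u])' )`. -/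
lemma lem1 (m : ℕ) : 4 * Nat.centralBinom m = Nat.centralBinom (m + 1) + 2 * catalan m := by
  have h1 := Nat.succ_mul_centralBinom_succ m
  have h2 := succ_mul_catalan_eq_centralBinom m
  refine Nat.eq_of_mul_eq_mul_left (Nat.succ_pos m) ?_
  nlinarith [h1, h2]

lemma lem2 (n : ℕ) :
    2 * ∑ i ∈ Finset.range (n + 1), catalan i * Nat.centralBinom (n - i)
      = Nat.centralBinom (n + 1) := by
  have hrefl := Finset.sum_range_reflect
    (fun i => catalan i * Nat.centralBinom (n - i)) (n + 1)
  have key : (∑ i ∈ Finset.range (n + 1), catalan i * Nat.centralBinom (n - i))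
      + ∑ i ∈ Finset.range (n + 1), catalan i * Nat.centralBinom (n - i)
      = (n + 2) * catalan (n + 1) := by
    nth_rewrite 2 [← hrefl]
    rw [← Finset.sum_add_distrib, catalan_succ, ← Finset.sum_range fun i => catalan i * catalan (n - i),
      Finset.mul_sum]
    apply Finset.sum_congr rfl
    intro i hi
    simp only [Finset.mem_range] at hi
    have h1 : n + 1 - 1 - i = n - i := by omega
    have h2 : n - (n - i) = i := by omega
    rw [h1, h2]
    have c1 := succ_mul_catalan_eq_centralBinom (n - i)
    have c2 := succ_mul_catalan_eq_centralBinom i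
    rw [← c1, ← c2, show n + 2 = (n - i + 1) + (i + 1) by omega]
    ring
  have c3 := succ_mul_catalan_eq_centralBinom (n + 1)
  rw [show n + 1 + 1 = n + 2 from rfl] at c3
  rw [← key] at c3
  omega

lemma lem3 (k : ℕ) :
    Nat.centralBinom (k + 2) = 3 * Nat.centralBinom (k + 1)
      + ∑ j ∈ Finset.range k, Nat.centralBinom (k - j) * catalan (j + 1) := by
  have h2 := lem2 (k + 1)
  have hsplit : ∑ i ∈ Finset.range (k + 2), catalan i * Nat.centralBinom (k + 1 - i)
      = Nat.centralBinom (k + 1) + catalan (k + 1)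
        + ∑ j ∈ Finset.range k, Nat.centralBinom (k - j) * catalan (j + 1) := by
    rw [Finset.sum_range_succ, Finset.sum_range_succ']
    simp only [catalan_zero, one_mul, Nat.sub_self, Nat.centralBinom_zero, mul_one, Nat.sub_zero]
    have : ∀ j ∈ Finset.range k, catalan (j + 1) * Nat.centralBinom (k + 1 - (j + 1))
        = Nat.centralBinom (k - j) * catalan (j + 1) := by
      intro j hj
      have : k + 1 - (j + 1) = k - j := by omega
      rw [this, mul_comm]
    rw [Finset.sum_congr rfl this]
    ring
  have h1 := lem1 (k + 1)
  rw [hsplit] at h2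
  rw [show k + 1 + 1 = k + 2 from rfl] at h1 h2
  omega

noncomputable def lenard (u : ℝ → ℝ) : ℕ → ℝ → ℝ
  | 0 => fun _ => 1 / 2
  | 1 => u
  | k + 2 => fun z =>
      deriv (deriv (lenard u (k + 1))) z
        + 3 * lenard u (k + 1) z * lenard u 1 z
        + ∑ j ∈ (Finset.range k).attach,
            (lenard u (k - j.1) z *
                (4 * lenard u 1 z * lenard u (j.1 + 1) z - lenard u (j.1 + 2) z
                  + 2 * deriv (deriv (lenard u (j.1 + 1))) z)
              - deriv (lenard u (j.1 + 1)) z * deriv (lenard u (k - j.1)) z)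
  termination_by k => k
  decreasing_by
    all_goals first
      | omega
      | (have h := j.2; simp only [Finset.mem_range] at h; omega)

/-- **Boundary values of the Lenard operators** (Lemma 3.2 of the paper): applied to a
constant function `a`, the Lenard operator `L_k` is the constant `(1/2)·C(2k, k)·aᵏ`. -/
lemma lenard_const (a : ℝ) :
    ∀ k : ℕ, lenard (fun _ => a) k
      = fun _ => (1 / 2) * (Nat.centralBinom k : ℝ) * a ^ k := by
  intro k
  induction k using Nat.strong_induction_on with
  | _ k ih =>
    match k with
    | 0 => funext z; simp [lenard, Nat.centralBinom]
    | 1 =>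
      funext z
      simp [lenard, show Nat.centralBinom 1 = 2 from rfl]
    | k + 2 =>
      have ih1 := ih (k + 1) (by omega)
      have ih0 := ih 1 (by omega)
      funext z
      rw [lenard]; beta_reduce
      have hsum : ∑ j ∈ (Finset.range k).attach,
            (lenard (fun _ => a) (k - j.1) z *
                (4 * lenard (fun _ => a) 1 z * lenard (fun _ => a) (j.1 + 1) z
                  - lenard (fun _ => a) (j.1 + 2) z
                  + 2 * deriv (deriv (lenard (fun _ => a) (j.1 + 1))) z)
              - deriv (lenard (fun _ => a) (j.1 + 1)) z
                  * deriv (lenard (fun _ => a) (k - j.1)) z)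
          = ∑ j ∈ (Finset.range k).attach,
              (1 / 2) * ((Nat.centralBinom (k - j.1) * catalan (j.1 + 1) : ℕ) : ℝ)
                * a ^ (k + 2) := by
        apply Finset.sum_congr rfl
        intro j _
        have hj : j.1 < k := Finset.mem_range.mp j.2
        have e1 := ih (k - j.1) (by omega)
        have e2 := ih (j.1 + 1) (by omega)
        have e3 := ih (j.1 + 2) (by omega)
        simp only [e1, e2, e3, ih0, deriv_const']
        have hcat : (4 : ℝ) * (Nat.centralBinom (j.1 + 1) : ℝ)
            - (Nat.centralBinom (j.1 + 2) : ℝ) = 2 * (catalan (j.1 + 1) : ℝ) := by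
          have h := lem1 (j.1 + 1)
          have h' : ((4 * Nat.centralBinom (j.1 + 1) : ℕ) : ℝ)
              = ((Nat.centralBinom (j.1 + 1 + 1) + 2 * catalan (j.1 + 1) : ℕ) : ℝ) := by
            exact_mod_cast congrArg (Nat.cast : ℕ → ℝ) h
          push_cast [show j.1 + 1 + 1 = j.1 + 2 from rfl] at h'
          linarith
        have hp : a ^ (k - j.1) * a ^ (j.1 + 2) = a ^ (k + 2) := by
          rw [← pow_add]; congr 1; omega
        push_cast [show Nat.centralBinom 1 = 2 from rfl]
        linear_combination
          ((1 / 4) * (Nat.centralBinom (k - j.1) : ℝ) * a ^ (k - j.1) * a ^ (j.1 + 2)) * hcat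
            + ((1 / 2) * (Nat.centralBinom (k - j.1) : ℝ) * (catalan (j.1 + 1) : ℝ)) * hp
      rw [hsum]
      simp only [ih1, ih0, deriv_const']
      rw [Finset.sum_attach (Finset.range k)
        (fun j => (1 / 2) * ((Nat.centralBinom (k - j) * catalan (j + 1) : ℕ) : ℝ) * a ^ (k + 2))]
      have hb : (Nat.centralBinom (k + 2) : ℝ)
          = 3 * (Nat.centralBinom (k + 1) : ℝ)
            + ((∑ j ∈ Finset.range k, Nat.centralBinom (k - j) * catalan (j + 1) : ℕ) : ℝ) := by
        exact_mod_cast congrArg (Nat.cast : ℕ → ℝ) (lem3 k)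
      have hS : ∑ j ∈ Finset.range k,
            (1 / 2) * ((Nat.centralBinom (k - j) * catalan (j + 1) : ℕ) : ℝ) * a ^ (k + 2)
          = (1 / 2) * ((∑ j ∈ Finset.range k,
              Nat.centralBinom (k - j) * catalan (j + 1) : ℕ) : ℝ) * a ^ (k + 2) := by
        rw [Nat.cast_sum, Finset.mul_sum, Finset.sum_mul]
      rw [hS, show Nat.centralBinom 1 = 2 from rfl]
      simp only [Nat.cast_ofNat]
      linear_combination (-(1 / 2) * a ^ (k + 2)) * hb

theorem lenard_constant_value (a : ℝ) :
    ∀ (k : ℕ) (z : ℝ),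
      lenard (fun _ => a) k z = (1 / 2) * (Nat.choose (2 * k) k : ℝ) * a ^ k := by
  intro k z
  rw [lenard_const a k, Nat.centralBinom_eq_two_mul_choose]
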